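/- For every n ≥ 0, the infinite Fibonacci word f has exactly one palindromic factor of length n if n is even, and exactly two palindromic factors of length n if n is odd. In particular, f has a palindromic factor of every length n ≥ 0. -/

import Mathlib

/-- The Fibonacci morphism φ: 0 ↦ 01, 1 ↦ 0. -/
def fibPhi (w : List ℕ) : List ℕ := (w.map (fun c => if c = 0 then [0, 1] else [0])).flatten

/-- The infinite Fibonacci word f = 0100101001001⋯, the fixed point of φ starting with 0. -/
def fibWord (i : ℕ) : ℕ := ((fibPhi^[i + 2]) [0]).getD i 0

/-- A finite word is a factor of the infinite Fibonacci word. -/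
def IsFibFactor (x : List ℕ) : Prop :=
  ∃ i : ℕ, x = (List.range x.length).map (fun t => fibWord (i + t))

noncomputable def alp : ℝ := (3 - Real.sqrt 5) / 2

lemma sqrt5_sq : Real.sqrt 5 ^ 2 = 5 := Real.sq_sqrt (by norm_num)

lemma sqrt5_lt : Real.sqrt 5 < 2.3 := by
  nlinarith [Real.sq_sqrt (show (5:ℝ) ≥ 0 by norm_num), Real.sqrt_nonneg 5]

lemma sqrt5_gt : (2.2:ℝ) < Real.sqrt 5 := by
  nlinarith [Real.sq_sqrt (show (5:ℝ) ≥ 0 by norm_num), Real.sqrt_nonneg 5]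

lemma alp_pos : 0 < alp := by unfold alp; nlinarith [sqrt5_lt]
lemma alp_lt_half : alp < 1/2 := by unfold alp; nlinarith [sqrt5_gt]
lemma alp_lt_one : alp < 1 := alp_lt_half.trans (by norm_num)
lemma alp_gt : (0.35:ℝ) < alp := by unfold alp; nlinarith [sqrt5_lt]
lemma alp_lt : alp < 0.4 := by unfold alp; nlinarith [sqrt5_gt]
lemma alp_sq : alp ^ 2 = 3 * alp - 1 := by unfold alp; nlinarith [sqrt5_sq]

lemma irrational_alp : Irrational alp := by
  have h5 : Irrational (Real.sqrt 5) := (Nat.prime_five).irrational_sqrt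
  have : Irrational ((3:ℤ) - Real.sqrt 5) := h5.intCast_sub 3
  simpa [alp, div_eq_mul_inv] using this.div_intCast (by norm_num : (2:ℤ) ≠ 0)

/-- key irrationality tool -/
lemma alp_lin (a b : ℤ) (ha : a ≠ 0) : (a:ℝ) * alp + b ≠ 0 := by
  intro h
  have : alp = (-b : ℝ) / a := by
    field_simp
    linarith
  have : ¬ Irrational alp := by
    rw [this]
    rw [show ((-b:ℝ)/a) = ((((-b : ℚ)/(a:ℚ)):ℚ) : ℝ) by push_cast; ring]
    exact Rat.not_irrational _
  exact this irrational_alp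

lemma fract_lin_ne_zero {x : ℝ} (a b : ℤ) (ha : a ≠ 0) (hx : x = a * alp + b) :
    Int.fract x ≠ 0 := by
  subst hx
  intro h
  set y : ℝ := (a:ℝ) * alp + b with hy
  have h2 : y = (⌊y⌋ : ℝ) := by
    have h3 := Int.self_sub_floor y
    rw [h] at h3; linarith
  exact alp_lin a (b - ⌊y⌋) ha (by push_cast; rw [hy] at h2; linarith)

/-- the Beatty letter -/
noncomputable def Blet (i : ℕ) : ℕ :=
  if 1 - alp ≤ Int.fract (((i:ℝ) + 1) * alp) then 1 else 0

lemma fract_theta_pos (m : ℕ) : 0 < Int.fract (((m:ℝ) + 1) * alp) :=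
  lt_of_le_of_ne (Int.fract_nonneg _)
    (Ne.symm (fract_lin_ne_zero (m+1) 0 (by positivity) (by push_cast; ring)))

lemma floor_step (v : ℝ) :
    ⌊v + alp⌋ = ⌊v⌋ + (if 1 - alp ≤ Int.fract v then 1 else 0) := by
  have hv : (⌊v⌋ : ℝ) + Int.fract v = v := Int.floor_add_fract v
  have h0 : 0 ≤ Int.fract v := Int.fract_nonneg v
  have h1 : Int.fract v < 1 := Int.fract_lt_one v
  split_ifs with h
  · rw [Int.floor_eq_iff]
    constructor
    · push_cast; nlinarith [alp_pos]
    · push_cast; nlinarith [alp_lt_one]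
  · rw [Int.floor_eq_iff]
    constructor
    · push_cast; nlinarith [alp_pos]
    · push_cast; push_neg at h; nlinarith [alp_pos]

noncomputable def psi (m : ℕ) : ℕ := 2 * m - (⌊((m:ℝ) + 1) * alp⌋).toNat

lemma floor_alp_nonneg (m : ℕ) : 0 ≤ ⌊((m:ℝ) + 1) * alp⌋ :=
  Int.floor_nonneg.2 (by have := alp_pos; positivity)

lemma floor_alp_le (m : ℕ) : ⌊((m:ℝ) + 1) * alp⌋ ≤ m := by
  have : ((m:ℝ) + 1) * alp < m + 1 := by nlinarith [alp_lt_one, alp_pos, Nat.cast_nonneg (α := ℝ) m]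
  have := Int.floor_lt.2 (by push_cast; linarith : ((m:ℝ)+1)*alp < ((m+1 : ℤ) : ℝ))
  omega

lemma psi_cast (m : ℕ) : (psi m : ℝ) = 2 * m - ⌊((m:ℝ) + 1) * alp⌋ := by
  have h1 := floor_alp_nonneg m
  have h2 := floor_alp_le m
  have h3 : (⌊((m:ℝ) + 1) * alp⌋).toNat ≤ 2 * m := by omega
  unfold psi
  have h4 : ((⌊((m:ℝ) + 1) * alp⌋.toNat : ℕ) : ℝ) = (⌊((m:ℝ) + 1) * alp⌋ : ℝ) := by
    exact_mod_cast congrArg (Int.cast : ℤ → ℝ) (Int.toNat_of_nonneg h1)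
  rw [Nat.cast_sub h3]
  push_cast
  rw [h4]

lemma key_fract1 (m : ℕ) :
    Int.fract (((psi m : ℝ) + 1) * alp) =
      (1 - Int.fract (((m:ℝ) + 1) * alp)) * (1 - alp) := by
  set a := ⌊((m:ℝ) + 1) * alp⌋ with ha
  set θ := Int.fract (((m:ℝ) + 1) * alp) with hθd
  have hθ : θ = ((m:ℝ) + 1) * alp - a := (Int.self_sub_floor _).symm
  have hθ0 : 0 < θ := fract_theta_pos m
  have hθ1 : θ < 1 := Int.fract_lt_one _
  have hint : (((psi m : ℝ) + 1) * alp) - ((1 - θ) * (1 - alp)) = (((m : ℤ) - a : ℤ) : ℝ) := by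
    rw [psi_cast, hθ]
    push_cast
    linear_combination (-((m:ℝ) + 1)) * alp_sq
  have h1 : Int.fract (((psi m : ℝ) + 1) * alp) = Int.fract ((1 - θ) * (1 - alp)) :=
    Int.fract_eq_fract.mpr ⟨(m : ℤ) - a, hint⟩
  rw [h1, Int.fract_eq_self.mpr]
  constructor
  · nlinarith [alp_lt_one]
  · nlinarith [alp_pos]

lemma key_fract2 (m : ℕ) :
    Int.fract (((psi m : ℝ) + 2) * alp) =
      Int.fract (((m:ℝ) + 1) * alp) * alp - Int.fract (((m:ℝ) + 1) * alp) + 1 := by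
  set a := ⌊((m:ℝ) + 1) * alp⌋ with ha
  set θ := Int.fract (((m:ℝ) + 1) * alp) with hθd
  have hθ : θ = ((m:ℝ) + 1) * alp - a := (Int.self_sub_floor _).symm
  have hθ0 : 0 < θ := fract_theta_pos m
  have hθ1 : θ < 1 := Int.fract_lt_one _
  have hint : (((psi m : ℝ) + 2) * alp) - (θ * alp - θ + 1) = (((m : ℤ) - a : ℤ) : ℝ) := by
    rw [psi_cast, hθ]
    push_cast
    linear_combination (-((m:ℝ) + 1)) * alp_sq
  have h1 : Int.fract (((psi m : ℝ) + 2) * alp) = Int.fract (θ * alp - θ + 1) :=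
    Int.fract_eq_fract.mpr ⟨(m : ℤ) - a, hint⟩
  rw [h1, Int.fract_eq_self.mpr]
  constructor
  · nlinarith [alp_pos, alp_lt_one]
  · nlinarith [alp_pos, alp_lt_one]

lemma Blet_psi_eq_zero (m : ℕ) : Blet (psi m) = 0 := by
  unfold Blet
  rw [if_neg]
  push_cast
  rw [key_fract1 m]
  have hθ0 : 0 < Int.fract (((m:ℝ) + 1) * alp) := fract_theta_pos m
  nlinarith [alp_lt_one]

lemma Blet_psi_succ (m : ℕ) (h : Blet m = 0) : Blet (psi m + 1) = 1 := by
  have hθ1 : Int.fract (((m:ℝ) + 1) * alp) < 1 - alp := by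
    unfold Blet at h
    by_contra hc
    push_neg at hc
    rw [if_pos hc] at h
    exact one_ne_zero h
  unfold Blet
  rw [if_pos]
  have h2 : (((psi m + 1 : ℕ) : ℝ) + 1) = ((psi m : ℝ) + 2) := by push_cast; ring
  rw [h2, key_fract2 m]
  have hθ0 : 0 < Int.fract (((m:ℝ) + 1) * alp) := fract_theta_pos m
  nlinarith [alp_sq, alp_pos]

lemma Blet_le_one (m : ℕ) : Blet m ≤ 1 := by unfold Blet; split_ifs <;> omega

lemma floor_succ_step (m : ℕ) :
    ⌊((((m+1:ℕ)):ℝ) + 1) * alp⌋ = ⌊((m:ℝ)+1) * alp⌋ + (Blet m : ℤ) := by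
  have h1 : ((((m+1:ℕ)):ℝ) + 1) * alp = ((m:ℝ)+1) * alp + alp := by push_cast; ring
  rw [h1, floor_step (((m:ℝ)+1) * alp)]
  unfold Blet
  split_ifs <;> norm_num

lemma psi_succ (m : ℕ) : psi (m + 1) = psi m + (2 - Blet m) := by
  have hle := Blet_le_one m
  have h0 := floor_alp_nonneg m
  have h2 := floor_alp_le m
  have h3 := floor_succ_step m
  unfold psi
  rw [h3]
  have h4 : (⌊((m:ℝ)+1) * alp⌋ + (Blet m : ℤ)).toNat = ⌊((m:ℝ)+1) * alp⌋.toNat + Blet m := by omega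
  rw [h4]
  omega

lemma fibPhi_append (u v : List ℕ) : fibPhi (u ++ v) = fibPhi u ++ fibPhi v := by
  simp [fibPhi]

lemma Blet_cases (m : ℕ) : Blet m = 0 ∨ Blet m = 1 := by unfold Blet; split_ifs <;> simp

lemma morph (m : ℕ) :
    fibPhi ((List.range m).map Blet) = (List.range (psi m)).map Blet := by
  induction m with
  | zero => simp [fibPhi, psi]
  | succ m ih =>
    rw [List.range_succ, List.map_append, fibPhi_append, ih, psi_succ]
    rcases Blet_cases m with h | h
    · rw [h]
      have h1 : fibPhi (List.map Blet [m]) = [0, 1] := by simp [h]; simp [fibPhi]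
      rw [show (2 - 0 : ℕ) = 2 from rfl]
      rw [show psi m + 2 = (psi m + 1) + 1 from rfl]
      rw [List.range_succ, List.range_succ, List.map_append, List.map_append, h1]
      simp [Blet_psi_eq_zero m, Blet_psi_succ m h]
    · rw [h]
      have h1 : fibPhi (List.map Blet [m]) = [0] := by simp [h]; simp [fibPhi]
      rw [show (2 - 1 : ℕ) = 1 from rfl]
      rw [List.range_succ, List.map_append, h1]
      simp [Blet_psi_eq_zero m]

noncomputable def Lfun : ℕ → ℕ
  | 0 => 1
  | n + 1 => psi (Lfun n)

lemma Blet_zero : Blet 0 = 0 := by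
  unfold Blet
  rw [if_neg]
  push_cast
  rw [show ((0:ℝ) + 1) * alp = alp by ring]
  rw [Int.fract_eq_self.mpr ⟨le_of_lt alp_pos, alp_lt_one⟩]
  push_neg
  nlinarith [alp_lt_half]

lemma chain (n : ℕ) : fibPhi^[n] [0] = (List.range (Lfun n)).map Blet := by
  induction n with
  | zero => simp [Lfun, List.range_succ, Blet_zero]
  | succ n ih =>
    rw [Function.iterate_succ_apply', ih, morph]
    rfl

lemma psi_ge (m : ℕ) (h : 1 ≤ m) : m + 1 ≤ psi m := by
  have h0 := floor_alp_nonneg m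
  have h2 : ⌊((m:ℝ)+1) * alp⌋ < (m : ℤ) := by
    rw [Int.floor_lt]
    have : ((m:ℝ) + 1) * alp < ((m:ℝ) + 1) / 2 := by
      nlinarith [alp_lt_half, Nat.cast_nonneg (α := ℝ) m]
    have h3 : ((m:ℝ) + 1) / 2 ≤ m := by
      have : (1:ℝ) ≤ m := by exact_mod_cast h
      linarith
    push_cast
    linarith
  unfold psi
  omega

lemma Lfun_ge (n : ℕ) : n + 1 ≤ Lfun n := by
  induction n with
  | zero => simp [Lfun]
  | succ n ih =>
    have := psi_ge (Lfun n) (le_trans (by omega) ih)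
    show n + 2 ≤ psi (Lfun n)
    omega

lemma fibWord_eq_Blet (i : ℕ) : fibWord i = Blet i := by
  unfold fibWord
  rw [chain (i + 2)]
  have hlen : i < ((List.range (Lfun (i+2))).map Blet).length := by
    rw [List.length_map, List.length_range]
    have := Lfun_ge (i + 2)
    omega
  rw [List.getD_eq_getElem _ _ hlen]
  rw [List.getElem_map]
  congr 1
  exact List.getElem_range _

/-! ## Rotation words -/

noncomputable def Lt (x : ℝ) (t : ℕ) : ℕ :=
  if 1 - alp ≤ Int.fract (x + (t:ℝ) * alp) then 1 else 0

noncomputable def Wrd (l : ℕ) (x : ℝ) : List ℕ := (List.range l).map (Lt x)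

noncomputable def Xpt (i : ℕ) : ℝ := Int.fract (((i:ℝ) + 1) * alp)

lemma Xpt_mem (i : ℕ) : Xpt i ∈ Set.Ico (0:ℝ) 1 :=
  ⟨Int.fract_nonneg _, Int.fract_lt_one _⟩

lemma Wrd_length (l : ℕ) (x : ℝ) : (Wrd l x).length = l := by
  simp [Wrd]

lemma fract_shift (i t : ℕ) :
    Int.fract ((((i + t : ℕ) :ℝ) + 1) * alp) = Int.fract (Xpt i + (t:ℝ) * alp) := by
  rw [Int.fract_eq_fract]
  refine ⟨⌊((i:ℝ) + 1) * alp⌋, ?_⟩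
  unfold Xpt Int.fract
  push_cast
  ring

lemma Blet_eq_Lt (i t : ℕ) : Blet (i + t) = Lt (Xpt i) t := by
  unfold Blet Lt
  rw [fract_shift]

lemma map_window_eq_Wrd (i l : ℕ) :
    (List.range l).map (fun t => fibWord (i + t)) = Wrd l (Xpt i) := by
  unfold Wrd
  apply List.map_congr_left
  intro t ht
  rw [fibWord_eq_Blet, Blet_eq_Lt]

lemma factor_char (x : List ℕ) (l : ℕ) :
    (IsFibFactor x ∧ x.length = l) ↔ ∃ i : ℕ, x = Wrd l (Xpt i) := by
  constructor
  · rintro ⟨⟨i, hi⟩, hl⟩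
    refine ⟨i, ?_⟩
    rw [hl] at hi
    rw [hi, map_window_eq_Wrd]
  · rintro ⟨i, hi⟩
    have hl : x.length = l := by rw [hi, Wrd_length]
    refine ⟨⟨i, ?_⟩, hl⟩
    rw [hl, hi, map_window_eq_Wrd]

lemma letter_iff (v : ℝ) : (1 - alp ≤ Int.fract v) ↔ ⌊v + alp⌋ = ⌊v⌋ + 1 := by
  rw [floor_step]
  split_ifs with h <;> simp [h] <;> omega

lemma Lt_eq_iff (x y : ℝ) (t : ℕ) :
    Lt x t = Lt y t ↔ ((1 - alp ≤ Int.fract (x + (t:ℝ)*alp)) ↔ (1 - alp ≤ Int.fract (y + (t:ℝ)*alp))) := by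
  unfold Lt
  split_ifs with h1 h2 h2 <;> simp [h1, h2] <;> tauto

lemma Wrd_eq_iff (l : ℕ) (x y : ℝ) (hx : x ∈ Set.Ico (0:ℝ) 1) (hy : y ∈ Set.Ico (0:ℝ) 1) :
    Wrd l x = Wrd l y ↔ ∀ s ≤ l, ⌊x + (s:ℝ) * alp⌋ = ⌊y + (s:ℝ) * alp⌋ := by
  unfold Wrd
  rw [List.map_inj_left]
  constructor
  · intro h s hs
    induction s with
    | zero =>
      simp only [Nat.cast_zero, zero_mul, add_zero]
      rw [Int.floor_eq_zero_iff.mpr hx, Int.floor_eq_zero_iff.mpr hy]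
    | succ s ih =>
      have hs' : s ≤ l := by omega
      have hsl : s < l := by omega
      have hlt := h s (List.mem_range.mpr hsl)
      rw [Lt_eq_iff] at hlt
      have hx1 : x + ((s+1:ℕ):ℝ) * alp = (x + (s:ℝ)*alp) + alp := by push_cast; ring
      have hy1 : y + ((s+1:ℕ):ℝ) * alp = (y + (s:ℝ)*alp) + alp := by push_cast; ring
      have ihs := ih hs'
      rw [hx1, hy1, floor_step, floor_step, ihs]
      by_cases hc : 1 - alp ≤ Int.fract (x + (s:ℝ)*alp)
      · rw [if_pos hc, if_pos (hlt.mp hc)]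
      · rw [if_neg hc, if_neg (fun hcy => hc (hlt.mpr hcy))]
  · intro h t ht
    rw [Lt_eq_iff, letter_iff, letter_iff]
    have ht' : t < l := List.mem_range.mp ht
    have e1 : x + (t:ℝ)*alp + alp = x + ((t+1:ℕ):ℝ)*alp := by push_cast; ring
    have e2 : y + (t:ℝ)*alp + alp = y + ((t+1:ℕ):ℝ)*alp := by push_cast; ring
    rw [e1, e2, h t (by omega), h (t+1) (by omega)]

def NonRes (l : ℕ) (x : ℝ) : Prop := ∀ s : ℕ, s ≤ l → Int.fract (x + (s:ℝ) * alp) ≠ 0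

lemma fract_add_alp_lt (u : ℝ) (h : Int.fract u < 1 - alp) :
    Int.fract (u + alp) = Int.fract u + alp := by
  have h1 : Int.fract (u + alp) = Int.fract (Int.fract u + alp) := by
    rw [Int.fract_eq_fract]
    exact ⟨⌊u⌋, by rw [Int.fract]; ring⟩
  rw [h1, Int.fract_eq_self.mpr]
  exact ⟨by nlinarith [Int.fract_nonneg u, alp_pos], by nlinarith [alp_pos]⟩

lemma fract_add_alp_ge (u : ℝ) (h : 1 - alp ≤ Int.fract u) :
    Int.fract (u + alp) = Int.fract u + alp - 1 := by
  have h1 : Int.fract (u + alp) = Int.fract (Int.fract u + alp - 1) := by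
    rw [Int.fract_eq_fract]
    exact ⟨⌊u⌋ + 1, by rw [Int.fract]; push_cast; ring⟩
  rw [h1, Int.fract_eq_self.mpr]
  constructor
  · linarith
  · nlinarith [Int.fract_lt_one u, alp_pos, alp_lt_one]

lemma rev_letter (u : ℝ) (h0 : Int.fract u ≠ 0) (h1 : Int.fract (u + alp) ≠ 0) :
    (1 - alp ≤ Int.fract (-(u + alp))) ↔ (1 - alp ≤ Int.fract u) := by
  rw [Int.fract_neg h1]
  by_cases hc : 1 - alp ≤ Int.fract u
  · rw [fract_add_alp_ge u hc]
    have h2 : Int.fract u + alp - 1 ≠ 0 := by rw [← fract_add_alp_ge u hc]; exact h1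
    have h3 : Int.fract u < 1 := Int.fract_lt_one u
    constructor
    · intro; exact hc
    · intro
      have : Int.fract u + alp - 1 > 0 :=
        lt_of_le_of_ne (by linarith) (Ne.symm h2)
      linarith
  · push_neg at hc
    rw [fract_add_alp_lt u hc]
    have h4 : 0 < Int.fract u := lt_of_le_of_ne (Int.fract_nonneg u) (Ne.symm h0)
    constructor
    · intro h5; linarith
    · intro h5; linarith

lemma Wrd_reverse (l : ℕ) (x y : ℝ) (k : ℤ) (hy : y = -(l:ℝ) * alp - x + k)
    (h : NonRes l x) : (Wrd l x).reverse = Wrd l y := by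
  apply List.ext_getElem
  · simp [Wrd]
  · intro t h1 h2
    have htl : t < l := by simpa [Wrd] using h2
    rw [List.getElem_reverse]
    unfold Wrd
    rw [List.getElem_map]; erw [List.getElem_map]
    have hlen : (List.range l).length = l := List.length_range (n := l)
    simp only [List.getElem_range, List.length_map, List.length_range]
    set s : ℕ := l - 1 - t with hs
    have hstl : s + t + 1 = l := by omega
    -- now prove Lt x s = Lt y t
    unfold Lt
    have hu0 : Int.fract (x + (s:ℝ) * alp) ≠ 0 := h s (by omega)
    have hu1 : Int.fract ((x + (s:ℝ) * alp) + alp) ≠ 0 := by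
      have : (x + (s:ℝ) * alp) + alp = x + ((s+1:ℕ):ℝ) * alp := by push_cast; ring
      rw [this]
      exact h (s+1) (by omega)
    have hyt : Int.fract (y + (t:ℝ) * alp) = Int.fract (-((x + (s:ℝ)*alp) + alp)) := by
      rw [Int.fract_eq_fract]
      refine ⟨k, ?_⟩
      rw [hy]
      have : ((l:ℕ):ℝ) = (s:ℝ) + (t:ℝ) + 1 := by
        rw [← hstl]; push_cast; ring
      rw [this]; ring
    rw [hyt]
    by_cases hc : 1 - alp ≤ Int.fract (x + (s:ℝ) * alp)
    · rw [if_pos hc, if_pos ((rev_letter _ hu0 hu1).mpr hc)]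
    · rw [if_neg hc, if_neg (fun hcy => hc ((rev_letter _ hu0 hu1).mp hcy))]

/-! ## Density of the orbit -/

lemma fract_nat_mul_ne (j : ℕ) (hj : 1 ≤ j) : Int.fract ((j:ℝ) * alp) ≠ 0 :=
  fract_lin_ne_zero (j:ℤ) 0 (by exact_mod_cast Nat.one_le_iff_ne_zero.mp hj) (by push_cast; ring)

lemma fract_of_neg_unit (w : ℝ) (h1 : -1 < w) (h2 : w < 0) : Int.fract w = w + 1 := by
  have h3 := Int.fract_add_intCast (w + 1) (-1)
  have h4 : (w + 1) + ((-1 : ℤ) : ℝ) = w := by push_cast; ring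
  rw [h4] at h3
  rw [h3, Int.fract_eq_self.mpr ⟨by linarith, by linarith⟩]

lemma exists_small_step {ε : ℝ} (hε : 0 < ε) :
    ∃ j : ℕ, 1 ≤ j ∧ (Int.fract ((j:ℝ) * alp) < ε ∨ 1 - ε < Int.fract ((j:ℝ) * alp)) := by
  obtain ⟨N, hN⟩ := exists_nat_gt (1 / ε)
  have hN0 : 0 < N := by
    by_contra h
    push_neg at h
    interval_cases N
    simp at hN
    nlinarith [one_div_pos.mpr hε]
  -- pigeonhole
  have hmaps : ∀ j ∈ Finset.range (N + 1),
      (⌊Int.fract (((j:ℝ) + 1) * alp) * N⌋).toNat ∈ Finset.range N := by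
    intro j _
    rw [Finset.mem_range]
    have h1 : Int.fract (((j:ℝ) + 1) * alp) * N < N := by
      have := Int.fract_lt_one (((j:ℝ) + 1) * alp)
      have hN' : (0:ℝ) < N := by exact_mod_cast hN0
      nlinarith
    have h2 : ⌊Int.fract (((j:ℝ) + 1) * alp) * N⌋ < (N:ℤ) := by
      rw [Int.floor_lt]; exact_mod_cast h1
    omega
  obtain ⟨a, ha, b, hb, hab, hfab⟩ :=
    Finset.exists_ne_map_eq_of_card_lt_of_maps_to
      (by simp : (Finset.range N).card < (Finset.range (N+1)).card) hmaps
  -- wlog a < b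
  wlog hlt : a < b generalizing a b
  · exact this b hb a ha hab.symm hfab.symm (by omega)
  set u := Int.fract (((a:ℝ) + 1) * alp) with hu
  set v := Int.fract (((b:ℝ) + 1) * alp) with hv
  have hclose : |u - v| < ε := by
    have h1 : (⌊u * N⌋ : ℝ) ≤ u * N := Int.floor_le _
    have h2 : u * N < ⌊u * N⌋ + 1 := Int.lt_floor_add_one _
    have h3 : (⌊v * N⌋ : ℝ) ≤ v * N := Int.floor_le _
    have h4 : v * N < ⌊v * N⌋ + 1 := Int.lt_floor_add_one _
    have h5 : (⌊u * N⌋ : ℝ) = (⌊v * N⌋ : ℝ) := by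
      have h6 : ⌊u * N⌋ = ⌊v * N⌋ := by
        have h7 : 0 ≤ ⌊u * N⌋ := Int.floor_nonneg.mpr
          (mul_nonneg (Int.fract_nonneg _) (by positivity))
        have h8 : 0 ≤ ⌊v * N⌋ := Int.floor_nonneg.mpr
          (mul_nonneg (Int.fract_nonneg _) (by positivity))
        omega
      exact_mod_cast h6
    have hN' : (0:ℝ) < N := by exact_mod_cast hN0
    rw [abs_lt]
    constructor <;> nlinarith [mul_pos hε hN', (div_lt_iff₀ hε).mp hN]
  refine ⟨b - a, by omega, ?_⟩
  have hd : Int.fract (((b - a : ℕ):ℝ) * alp) = Int.fract (v - u) := by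
    rw [Int.fract_eq_fract]
    refine ⟨⌊((b:ℝ)+1) * alp⌋ - ⌊((a:ℝ)+1) * alp⌋, ?_⟩
    rw [hu, hv]
    unfold Int.fract
    push_cast [Nat.cast_sub (le_of_lt hlt)]
    ring
  rw [hd]
  have hne : v - u ≠ 0 := by
    intro h
    have : Int.fract (((b - a : ℕ):ℝ) * alp) = 0 := by rw [hd, h]; exact Int.fract_zero
    exact fract_nat_mul_ne (b - a) (by omega) this
  rcases lt_or_gt_of_ne hne with h | h
  · right
    have hvu1 : (-1:ℝ) < v - u := by
      have : 0 ≤ v := Int.fract_nonneg _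
      have : u < 1 := Int.fract_lt_one _
      linarith
    rw [fract_of_neg_unit _ hvu1 h]
    rw [abs_lt] at hclose
    linarith
  · left
    have hvu1 : v - u < 1 := by
      have : v < 1 := Int.fract_lt_one _
      have : 0 ≤ u := Int.fract_nonneg _
      linarith
    rw [Int.fract_eq_self.mpr ⟨by linarith, hvu1⟩]
    rw [abs_lt] at hclose
    linarith

lemma exists_orbit_close (q ε : ℝ) (hq0 : 0 < q) (hq1 : q < 1) (hε : 0 < ε) :
    ∃ j : ℕ, 1 ≤ j ∧ |Int.fract ((j:ℝ) * alp) - q| < ε := by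
  set ε' := min ε (min q (1 - q)) with hε'
  have hε'0 : 0 < ε' := by
    apply lt_min hε
    exact lt_min hq0 (by linarith)
  have hε'ε : ε' ≤ ε := min_le_left _ _
  have hε'q : ε' ≤ q := le_trans (min_le_right _ _) (min_le_left _ _)
  have hε'q1 : ε' ≤ 1 - q := le_trans (min_le_right _ _) (min_le_right _ _)
  obtain ⟨j0, hj0, hcase⟩ := exists_small_step hε'0
  have hj0R : (1:ℝ) ≤ (j0:ℝ) := by exact_mod_cast hj0
  rcases hcase with h | h
  · -- small positive step δ
    set δ := Int.fract ((j0:ℝ) * alp) with hδ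
    have hδ0 : 0 < δ := lt_of_le_of_ne (Int.fract_nonneg _) (Ne.symm (fract_nat_mul_ne j0 hj0))
    set m := ⌊q / δ⌋₊ + 1 with hm
    have hm1 : (m:ℝ) * δ ≤ q + δ := by
      have h1 : (⌊q / δ⌋₊ : ℝ) ≤ q / δ := Nat.floor_le (by positivity)
      have h2 : (m:ℝ) = (⌊q / δ⌋₊ : ℝ) + 1 := by rw [hm]; push_cast; ring
      rw [h2]
      have := (le_div_iff₀ hδ0).mp h1
      nlinarith
    have hm2 : q < (m:ℝ) * δ := by
      have h1 : q / δ < (⌊q / δ⌋₊ : ℝ) + 1 := Nat.lt_floor_add_one _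
      have h2 : (m:ℝ) = (⌊q / δ⌋₊ : ℝ) + 1 := by rw [hm]; push_cast; ring
      rw [h2]
      exact (div_lt_iff₀ hδ0).mp h1
    have hmδ1 : (m:ℝ) * δ < 1 := by
      have : δ < ε' := h
      linarith [hε'q1]
    refine ⟨m * j0, Nat.mul_pos (by omega) hj0, ?_⟩
    have hfr : Int.fract (((m * j0 : ℕ):ℝ) * alp) = (m:ℝ) * δ := by
      have h1 : Int.fract (((m * j0 : ℕ):ℝ) * alp) = Int.fract ((m:ℝ) * δ) := by
        rw [Int.fract_eq_fract]
        refine ⟨(m:ℤ) * ⌊(j0:ℝ) * alp⌋, ?_⟩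
        rw [hδ]
        unfold Int.fract
        push_cast
        ring
      rw [h1, Int.fract_eq_self.mpr ⟨by positivity, hmδ1⟩]
    rw [hfr, abs_lt]
    constructor <;> nlinarith
  · -- step close to 1 : going down
    set δ' := 1 - Int.fract ((j0:ℝ) * alp) with hδ'
    have hδ'0 : 0 < δ' := by
      have := Int.fract_lt_one ((j0:ℝ) * alp)
      rw [hδ']; linarith
    have hδ'ε : δ' < ε' := by rw [hδ']; linarith
    set m := ⌊(1 - q) / δ'⌋₊ + 1 with hm
    have hm1 : (m:ℝ) * δ' ≤ (1 - q) + δ' := by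
      have h1 : (⌊(1-q) / δ'⌋₊ : ℝ) ≤ (1-q) / δ' :=
        Nat.floor_le (div_nonneg (by linarith) (le_of_lt hδ'0))
      have h2 : (m:ℝ) = (⌊(1-q) / δ'⌋₊ : ℝ) + 1 := by rw [hm]; push_cast; ring
      rw [h2]
      have := (le_div_iff₀ hδ'0).mp h1
      nlinarith
    have hm2 : 1 - q < (m:ℝ) * δ' := by
      have h1 : (1-q) / δ' < (⌊(1-q) / δ'⌋₊ : ℝ) + 1 := Nat.lt_floor_add_one _
      have h2 : (m:ℝ) = (⌊(1-q) / δ'⌋₊ : ℝ) + 1 := by rw [hm]; push_cast; ring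
      rw [h2]
      exact (div_lt_iff₀ hδ'0).mp h1
    have hmδ1 : (m:ℝ) * δ' < 1 := by linarith [hε'q]
    have hmδ0 : 0 < (m:ℝ) * δ' := by positivity
    refine ⟨m * j0, Nat.mul_pos (by omega) hj0, ?_⟩
    have hfr : Int.fract (((m * j0 : ℕ):ℝ) * alp) = 1 - (m:ℝ) * δ' := by
      have h1 : Int.fract (((m * j0 : ℕ):ℝ) * alp) = Int.fract (-((m:ℝ) * δ')) := by
        rw [Int.fract_eq_fract]
        refine ⟨(m:ℤ) * ⌊(j0:ℝ) * alp⌋ + m, ?_⟩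
        rw [hδ']
        unfold Int.fract
        push_cast
        ring
      rw [h1, fract_of_neg_unit _ (by linarith) (by linarith)]
      ring
    rw [hfr, abs_lt]
    constructor <;> nlinarith

/-! ## Fixed points -/

lemma floor_eq_of_close (a b : ℝ) (h0 : Int.fract a ≠ 0)
    (h : |b - a| < min (Int.fract a) (1 - Int.fract a)) : ⌊b⌋ = ⌊a⌋ := by
  have hfa0 : 0 < Int.fract a := lt_of_le_of_ne (Int.fract_nonneg a) (Ne.symm h0)
  have hfa1 : Int.fract a < 1 := Int.fract_lt_one a
  have hfl : (⌊a⌋:ℝ) = a - Int.fract a := by rw [Int.fract]; ring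
  have h1 : |b - a| < Int.fract a := lt_of_lt_of_le h (min_le_left _ _)
  have h2 : |b - a| < 1 - Int.fract a := lt_of_lt_of_le h (min_le_right _ _)
  rw [abs_lt] at h1 h2
  rw [Int.floor_eq_iff (R := ℝ)]
  constructor
  · rw [hfl]; linarith [h1.1]
  · rw [hfl]; linarith [h2.2]

noncomputable def rr (l : ℕ) : ℝ := Int.fract (-(l:ℝ) * alp / 2)

noncomputable def qlow (l : ℕ) : ℝ := if rr l < 1/2 then rr l else rr l - 1/2

noncomputable def qhigh (l : ℕ) : ℝ := qlow l + 1/2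

lemma rr_ne (l : ℕ) (hl : 1 ≤ l) (k : ℤ) : 2 * rr l ≠ k := by
  intro h
  unfold rr Int.fract at h
  apply alp_lin (l:ℤ) (2 * ⌊-(l:ℝ) * alp / 2⌋ + k) (by exact_mod_cast Nat.one_le_iff_ne_zero.mp hl)
  push_cast
  linarith

lemma rr_mem (l : ℕ) (hl : 1 ≤ l) : 0 < rr l ∧ rr l < 1 ∧ rr l ≠ 1/2 := by
  refine ⟨lt_of_le_of_ne (Int.fract_nonneg _) ?_, Int.fract_lt_one _, ?_⟩
  · intro h
    exact rr_ne l hl 0 (by rw [← h]; norm_num)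
  · intro h
    exact rr_ne l hl 1 (by rw [h]; norm_num)

lemma qlow_bounds (l : ℕ) (hl : 1 ≤ l) : 0 < qlow l ∧ qlow l < 1/2 := by
  obtain ⟨h0, h1, hh⟩ := rr_mem l hl
  unfold qlow
  split_ifs with h
  · exact ⟨h0, h⟩
  · push_neg at h
    have : 1/2 < rr l := lt_of_le_of_ne h (Ne.symm hh)
    constructor <;> linarith

lemma qlow_spec (l : ℕ) : ∃ k : ℤ, 2 * qlow l = -(l:ℝ) * alp + k := by
  unfold qlow
  split_ifs with h
  · exact ⟨-2 * ⌊-(l:ℝ) * alp / 2⌋, by unfold rr Int.fract; push_cast; ring⟩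
  · exact ⟨-2 * ⌊-(l:ℝ) * alp / 2⌋ - 1, by unfold rr Int.fract; push_cast; ring⟩

lemma qhigh_spec (l : ℕ) : ∃ k : ℤ, 2 * qhigh l = -(l:ℝ) * alp + k := by
  obtain ⟨k, hk⟩ := qlow_spec l
  exact ⟨k + 1, by unfold qhigh; push_cast; linarith⟩

lemma fixed_classify (l : ℕ) (hl : 1 ≤ l) (q : ℝ) (hq : q ∈ Set.Ico (0:ℝ) 1)
    (h : ∃ k : ℤ, 2 * q = -(l:ℝ) * alp + k) : q = qlow l ∨ q = qhigh l := by
  obtain ⟨k, hk⟩ := h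
  obtain ⟨k0, hk0⟩ := qlow_spec l
  have hdiff : 2 * (q - qlow l) = ((k - k0 : ℤ) : ℝ) := by push_cast; linarith
  obtain ⟨hql0, hql1⟩ := qlow_bounds l hl
  obtain ⟨hq0, hq1⟩ := hq
  have hb1 : -1 < (k - k0 : ℤ) := by
    have : (-1 : ℝ) < ((k - k0 : ℤ) : ℝ) := by rw [← hdiff]; linarith
    exact_mod_cast this
  have hb2 : (k - k0 : ℤ) < 2 := by
    have : ((k - k0 : ℤ) : ℝ) < 2 := by rw [← hdiff]; linarith
    exact_mod_cast this
  interval_cases h' : (k - k0 : ℤ)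
  · left
    push_cast at hdiff
    linarith
  · right
    push_cast at hdiff
    unfold qhigh
    linarith

lemma Xpt_nonres (i : ℕ) (l : ℕ) : NonRes l (Xpt i) := by
  intro s _
  rw [← fract_shift i s]
  have : (((i + s : ℕ):ℝ) + 1) * alp = ((i + s + 1 : ℕ):ℝ) * alp := by push_cast; ring
  rw [this]
  exact fract_nat_mul_ne (i + s + 1) (by omega)

/-- The midpoint construction: a palindromic factor equals the word of a fixed point. -/
lemma pal_factor_fixed (l : ℕ) (hl : 1 ≤ l) (i : ℕ)
    (hpal : (Wrd l (Xpt i)).reverse = Wrd l (Xpt i)) :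
    ∃ m : ℝ, m ∈ Set.Ico (0:ℝ) 1 ∧ (∃ k : ℤ, 2 * m = -(l:ℝ) * alp + k) ∧
      Wrd l (Xpt i) = Wrd l m ∧ NonRes l m := by
  set p := Xpt i with hp
  have hpm : p ∈ Set.Ico (0:ℝ) 1 := Xpt_mem i
  have hpnr : NonRes l p := Xpt_nonres i l
  set y := Int.fract (-(l:ℝ) * alp - p) with hy
  have hym : y ∈ Set.Ico (0:ℝ) 1 := ⟨Int.fract_nonneg _, Int.fract_lt_one _⟩
  have hyeq : y = -(l:ℝ) * alp - p + ((-⌊-(l:ℝ) * alp - p⌋ : ℤ) : ℝ) := by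
    rw [hy]; unfold Int.fract; push_cast; ring
  have hrev : (Wrd l p).reverse = Wrd l y := Wrd_reverse l p y (-⌊-(l:ℝ) * alp - p⌋) hyeq hpnr
  have hWeq : Wrd l p = Wrd l y := by rw [← hrev, hpal]
  have hfl : ∀ s : ℕ, s ≤ l → ⌊p + (s:ℝ) * alp⌋ = ⌊y + (s:ℝ) * alp⌋ :=
    (Wrd_eq_iff l p y hpm hym).mp hWeq
  have hynr : NonRes l y := by
    intro s hs
    have h1 : y + (s:ℝ) * alp = -(p + ((l - s : ℕ):ℝ) * alp) + ((-⌊-(l:ℝ) * alp - p⌋ : ℤ):ℝ) := by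
      rw [hyeq]
      push_cast [Nat.cast_sub hs]
      ring
    rw [h1, Int.fract_add_intCast, Int.fract_neg (hpnr (l - s) (by omega))]
    have := Int.fract_lt_one (p + ((l - s : ℕ):ℝ) * alp)
    intro hz
    linarith
  refine ⟨(p + y) / 2, ?_, ?_, ?_, ?_⟩
  · constructor
    · have := hpm.1; have := hym.1; simp; linarith
    · have := hpm.2; have := hym.2; simp; linarith
  · refine ⟨-⌊-(l:ℝ) * alp - p⌋, ?_⟩
    rw [hyeq]; push_cast; ring
  · rw [Wrd_eq_iff l p _ hpm ⟨by have := hpm.1; have := hym.1; linarith,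
      by have := hpm.2; have := hym.2; linarith⟩]
    intro s hs
    have hc := hfl s hs
    have h1 : (⌊p + (s:ℝ)*alp⌋ : ℝ) < p + (s:ℝ)*alp := by
      have h2 := hpnr s hs
      have h3 := Int.fract_nonneg (p + (s:ℝ)*alp)
      unfold Int.fract at h2 h3
      rcases lt_or_eq_of_le h3 with h4 | h4
      · linarith
      · exact absurd h4.symm h2
    have h1y : (⌊y + (s:ℝ)*alp⌋ : ℝ) < y + (s:ℝ)*alp := by
      have h2 := hynr s hs
      have h3 := Int.fract_nonneg (y + (s:ℝ)*alp)
      unfold Int.fract at h2 h3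
      rcases lt_or_eq_of_le h3 with h4 | h4
      · linarith
      · exact absurd h4.symm h2
    have h5 := Int.lt_floor_add_one (p + (s:ℝ)*alp)
    have h6 := Int.lt_floor_add_one (y + (s:ℝ)*alp)
    symm
    rw [Int.floor_eq_iff (R := ℝ)]
    rw [hc] at h1
    constructor
    · push_cast; rw [hc] at *; linarith
    · push_cast; rw [hc] at *; linarith
  · intro s hs
    have hc := hfl s hs
    have h1 : (⌊p + (s:ℝ)*alp⌋ : ℝ) < p + (s:ℝ)*alp := by
      have h2 := hpnr s hs
      have h3 := Int.fract_nonneg (p + (s:ℝ)*alp)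
      unfold Int.fract at h2 h3
      rcases lt_or_eq_of_le h3 with h4 | h4
      · linarith
      · exact absurd h4.symm h2
    have h1y : (⌊y + (s:ℝ)*alp⌋ : ℝ) < y + (s:ℝ)*alp := by
      have h2 := hynr s hs
      have h3 := Int.fract_nonneg (y + (s:ℝ)*alp)
      unfold Int.fract at h2 h3
      rcases lt_or_eq_of_le h3 with h4 | h4
      · linarith
      · exact absurd h4.symm h2
    have h5 := Int.lt_floor_add_one (p + (s:ℝ)*alp)
    have h6 := Int.lt_floor_add_one (y + (s:ℝ)*alp)
    have hfloor : ⌊(p + y)/2 + (s:ℝ)*alp⌋ = ⌊p + (s:ℝ)*alp⌋ := by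
      rw [Int.floor_eq_iff (R := ℝ)]
      rw [hc] at *
      constructor
      · push_cast; linarith
      · push_cast; linarith
    unfold Int.fract
    rw [hfloor]
    rw [hc] at h1
    intro hz
    have : (p + y)/2 + (s:ℝ)*alp = (⌊p + (s:ℝ)*alp⌋ : ℝ) := by linarith
    rw [hc] at this h5
    linarith

/-- every fixed point with non-resonance gives a palindromic factor -/
lemma fixed_gives_pal (l : ℕ) (q : ℝ) (hq : q ∈ Set.Ico (0:ℝ) 1)
    (hspec : ∃ k : ℤ, 2 * q = -(l:ℝ) * alp + k) (hnr : NonRes l q) :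
    IsFibFactor (Wrd l q) ∧ (Wrd l q).length = l ∧ (Wrd l q).reverse = Wrd l q := by
  obtain ⟨k, hk⟩ := hspec
  have hpal : (Wrd l q).reverse = Wrd l q :=
    Wrd_reverse l q q k (by linarith) hnr
  have hq0 : 0 < q := by
    rcases lt_or_eq_of_le hq.1 with h | h
    · exact h
    · exfalso
      apply hnr 0 (by omega)
      rw [← h]
      norm_num
  set F : ℕ → ℝ := fun s => min (Int.fract (q + (s:ℝ) * alp)) (1 - Int.fract (q + (s:ℝ) * alp))
    with hF
  have hFpos : ∀ s, s ≤ l → 0 < F s := by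
    intro s hs
    have h1 : Int.fract (q + (s:ℝ)*alp) ≠ 0 := hnr s hs
    have h2 : 0 ≤ Int.fract (q + (s:ℝ)*alp) := Int.fract_nonneg _
    have h3 : Int.fract (q + (s:ℝ)*alp) < 1 := Int.fract_lt_one _
    apply lt_min
    · exact lt_of_le_of_ne h2 (Ne.symm h1)
    · linarith
  set ε : ℝ := (Finset.range (l+1)).inf' ⟨0, by simp⟩ F with hε
  have hεpos : 0 < ε := by
    rw [hε]; refine (Finset.lt_inf'_iff _).2 ?_
    intro s hsm
    exact hFpos s (by simpa [Nat.lt_succ_iff] using hsm)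
  obtain ⟨j, hj1, hjc⟩ := exists_orbit_close q ε hq0 hq.2 hεpos
  have hXj : Xpt (j - 1) = Int.fract ((j:ℝ) * alp) := by
    unfold Xpt
    congr 1
    congr 1
    push_cast [Nat.cast_sub hj1]
    ring
  have hfactor : Wrd l (Xpt (j-1)) = Wrd l q := by
    rw [Wrd_eq_iff l _ q (Xpt_mem _) hq]
    intro s hs
    apply floor_eq_of_close
    · exact hnr s hs
    · have h5 : ε ≤ F s := by
        rw [hε]
        exact Finset.inf'_le F (by simp [Nat.lt_succ_iff]; omega)
      have h6 : |Xpt (j-1) + (s:ℝ)*alp - (q + (s:ℝ)*alp)| = |Int.fract ((j:ℝ)*alp) - q| := by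
        rw [hXj]; congr 1; ring
      rw [h6]
      calc |Int.fract ((j:ℝ)*alp) - q| < ε := hjc
        _ ≤ _ := h5
  refine ⟨⟨j - 1, ?_⟩, Wrd_length l q, hpal⟩
  rw [Wrd_length l q, ← hfactor, map_window_eq_Wrd]

lemma qlow_one : qlow 1 = 1/2 - alp/2 := by
  have h1 : rr 1 = 1 - alp/2 := by
    unfold rr
    have e : -((1:ℕ):ℝ) * alp / 2 = -(alp/2) := by push_cast; ring
    rw [e]
    rw [fract_of_neg_unit (-(alp/2)) (by nlinarith [alp_lt_one, alp_pos]) (by nlinarith [alp_pos])]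
    ring
  unfold qlow
  rw [h1]
  rw [if_neg (by push_neg; nlinarith [alp_lt_one])]
  ring

lemma Wrd_qlow_ne_qhigh (l : ℕ) (hl : 1 ≤ l) : Wrd l (qlow l) ≠ Wrd l (qhigh l) := by
  obtain ⟨hq0, hq1⟩ := qlow_bounds l hl
  have hqlm : qlow l ∈ Set.Ico (0:ℝ) 1 := ⟨le_of_lt hq0, by linarith⟩
  have hqhm : qhigh l ∈ Set.Ico (0:ℝ) 1 := by
    unfold qhigh; constructor <;> [linarith; linarith]
  intro heq
  have hfl := (Wrd_eq_iff l _ _ hqlm hqhm).mp heq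
  have ha1 := alp_gt
  have ha2 := alp_lt
  by_cases hcase : 1/2 - alp ≤ qlow l
  · have h1 : ⌊qlow l + ((1:ℕ):ℝ) * alp⌋ = 0 := by
      rw [Int.floor_eq_iff]
      push_cast
      constructor <;> nlinarith
    have h2 : ⌊qhigh l + ((1:ℕ):ℝ) * alp⌋ = 1 := by
      rw [Int.floor_eq_iff]
      unfold qhigh
      push_cast
      constructor <;> nlinarith
    have := hfl 1 hl
    omega
  · push_neg at hcase
    have hl2 : 2 ≤ l := by
      rcases Nat.lt_or_ge l 2 with h | h
      · interval_cases l
        · rw [qlow_one] at hcase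
          nlinarith
      · exact h
    have h1 : ⌊qlow l + ((2:ℕ):ℝ) * alp⌋ = 0 := by
      rw [Int.floor_eq_iff]
      push_cast
      constructor <;> nlinarith
    have h2 : ⌊qhigh l + ((2:ℕ):ℝ) * alp⌋ = 1 := by
      rw [Int.floor_eq_iff]
      unfold qhigh
      push_cast
      constructor <;> nlinarith
    have := hfl 2 hl2
    omega

lemma q_nonres_aux (l : ℕ) (q : ℝ)
    (hspec : ∃ k : ℤ, 2 * q = -(l:ℝ) * alp + k) (s : ℕ) (hs2 : 2 * s ≠ l) :
    Int.fract (q + (s:ℝ) * alp) ≠ 0 := by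
  intro h0
  have hc : q + (s:ℝ) * alp = (⌊q + (s:ℝ) * alp⌋ : ℝ) := by
    unfold Int.fract at h0; linarith
  obtain ⟨k, hk⟩ := hspec
  apply alp_lin ((l:ℤ) - 2 * s) (2 * ⌊q + (s:ℝ) * alp⌋ - k) (by omega)
  push_cast
  linear_combination hk - 2 * hc


/-- The Fibonacci word has exactly one palindromic factor of each even length
and exactly two palindromic factors of each odd length. -/
theorem fibWord_palindrome_count :
    ∀ n : ℕ, {x : List ℕ | IsFibFactor x ∧ x.length = n ∧ x.reverse = x}.ncard =
      if Even n then 1 else 2 := by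
  intro n
  rcases Nat.eq_zero_or_pos n with hn0 | hn1
  · subst hn0
    rw [if_pos Even.zero]
    have hset : {x : List ℕ | IsFibFactor x ∧ x.length = 0 ∧ x.reverse = x} = {([] : List ℕ)} := by
      ext x
      simp only [Set.mem_setOf_eq, Set.mem_singleton_iff]
      constructor
      · rintro ⟨-, h, -⟩
        exact List.length_eq_zero_iff.mp h
      · rintro rfl
        exact ⟨⟨0, by simp⟩, by simp, by simp⟩
    rw [hset, Set.ncard_singleton]
  · have hn1' : 1 ≤ n := hn1
    obtain ⟨hql0, hql1⟩ := qlow_bounds n hn1'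
    have hqlm : qlow n ∈ Set.Ico (0:ℝ) 1 := ⟨le_of_lt hql0, by linarith⟩
    have hqhm : qhigh n ∈ Set.Ico (0:ℝ) 1 := by
      unfold qhigh; exact ⟨by linarith, by linarith⟩
    have hlh : qlow n ≠ qhigh n := by
      unfold qhigh; intro h; linarith [congrArg id h]
    by_cases hpar : Even n
    · rw [if_pos hpar]
      obtain ⟨mh, hmh⟩ := hpar
      set r0 := Int.fract (-(mh:ℝ) * alp) with hr0
      have hr0mem : r0 ∈ Set.Ico (0:ℝ) 1 := ⟨Int.fract_nonneg _, Int.fract_lt_one _⟩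
      have hncast : ((n:ℕ):ℝ) = 2 * (mh:ℝ) := by rw [hmh]; push_cast; ring
      have hr0spec : ∃ k : ℤ, 2 * r0 = -(n:ℝ) * alp + k := by
        refine ⟨-2 * ⌊-(mh:ℝ) * alp⌋, ?_⟩
        rw [hr0]; unfold Int.fract
        rw [hncast]; push_cast; ring
      have hr0class := fixed_classify n hn1' r0 hr0mem hr0spec
      set qe := if r0 = qlow n then qhigh n else qlow n with hqe
      have hqene : qe ≠ r0 := by
        rw [hqe]
        split_ifs with h
        · rw [h]; exact fun hh => hlh hh.symm
        · exact fun hh => h hh.symm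
      have hqemem : qe ∈ Set.Ico (0:ℝ) 1 := by
        rw [hqe]; split_ifs <;> assumption
      have hqespec : ∃ k : ℤ, 2 * qe = -(n:ℝ) * alp + k := by
        rw [hqe]; split_ifs
        · exact qhigh_spec n
        · exact qlow_spec n
      have hqeclass : qe = qlow n ∨ qe = qhigh n := by
        rw [hqe]; split_ifs
        · right; rfl
        · left; rfl
      have hmh_le : mh ≤ n := by omega
      have h2mh : 2 * mh = n := by omega
      have hqenr : NonRes n qe := by
        intro s hs
        by_cases hs2 : 2 * s = n
        · have hsmh : s = mh := by omega
          subst hsmh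
          intro h0
          apply hqene
          have hc : qe + (s:ℝ) * alp = (⌊qe + (s:ℝ) * alp⌋ : ℝ) := by
            unfold Int.fract at h0; linarith
          have : qe = -(s:ℝ) * alp + (⌊qe + (s:ℝ) * alp⌋ : ℝ) := by linarith
          rw [hr0]
          rw [show qe = Int.fract qe from (Int.fract_eq_self.mpr ⟨hqemem.1, hqemem.2⟩).symm, this]
          rw [Int.fract_eq_fract]
          exact ⟨⌊qe + (s:ℝ) * alp⌋, by push_cast; ring⟩
        · exact q_nonres_aux n qe hqespec s hs2
      -- set equality
      have hset : {x : List ℕ | IsFibFactor x ∧ x.length = n ∧ x.reverse = x} = {Wrd n qe} := by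
        ext x
        simp only [Set.mem_setOf_eq, Set.mem_singleton_iff]
        constructor
        · rintro ⟨hf, hlen, hrev⟩
          obtain ⟨i, hi⟩ := (factor_char x n).mp ⟨hf, hlen⟩
          have hpal : (Wrd n (Xpt i)).reverse = Wrd n (Xpt i) := by rw [← hi]; exact hrev
          obtain ⟨m, hmmem, hmspec, hmeq, hmnr⟩ := pal_factor_fixed n hn1' i hpal
          have hmclass := fixed_classify n hn1' m hmmem hmspec
          have hmner0 : m ≠ r0 := by
            intro h
            apply hmnr mh hmh_le
            rw [h, hr0]
            have he : Int.fract (-(mh:ℝ) * alp) + (mh:ℝ) * alp = ((-⌊-(mh:ℝ) * alp⌋ : ℤ) : ℝ) := by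
              unfold Int.fract; push_cast; ring
            rw [he, Int.fract_intCast]
          have hmqe : m = qe := by
            rcases hr0class with h | h
            · rcases hmclass with h' | h'
              · exact absurd (h'.trans h.symm) hmner0
              · rw [hqe, if_pos h]; exact h'
            · rcases hmclass with h' | h'
              · rw [hqe, if_neg (fun hh => hlh (hh.symm.trans h))]; exact h'
              · exact absurd (h'.trans h.symm) hmner0
          rw [hi, hmeq, hmqe]
        · rintro rfl
          obtain ⟨h1, h2, h3⟩ := fixed_gives_pal n qe hqemem hqespec hqenr
          exact ⟨h1, h2, h3⟩
      rw [hset, Set.ncard_singleton]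
    · rw [if_neg hpar]
      have hodd : ∀ s : ℕ, 2 * s ≠ n := by
        intro s h
        exact hpar ⟨s, by omega⟩
      have hnrl : NonRes n (qlow n) := fun s _ => q_nonres_aux n _ (qlow_spec n) s (hodd s)
      have hnrh : NonRes n (qhigh n) := fun s _ => q_nonres_aux n _ (qhigh_spec n) s (hodd s)
      have hset : {x : List ℕ | IsFibFactor x ∧ x.length = n ∧ x.reverse = x} =
          {Wrd n (qlow n), Wrd n (qhigh n)} := by
        ext x
        simp only [Set.mem_setOf_eq, Set.mem_insert_iff, Set.mem_singleton_iff]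
        constructor
        · rintro ⟨hf, hlen, hrev⟩
          obtain ⟨i, hi⟩ := (factor_char x n).mp ⟨hf, hlen⟩
          have hpal : (Wrd n (Xpt i)).reverse = Wrd n (Xpt i) := by rw [← hi]; exact hrev
          obtain ⟨m, hmmem, hmspec, hmeq, hmnr⟩ := pal_factor_fixed n hn1' i hpal
          rcases fixed_classify n hn1' m hmmem hmspec with h | h
          · left; rw [hi, hmeq, h]
          · right; rw [hi, hmeq, h]
        · rintro (rfl | rfl)
          · obtain ⟨h1, h2, h3⟩ := fixed_gives_pal n _ hqlm (qlow_spec n) hnrl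
            exact ⟨h1, h2, h3⟩
          · obtain ⟨h1, h2, h3⟩ := fixed_gives_pal n _ hqhm (qhigh_spec n) hnrh
            exact ⟨h1, h2, h3⟩
      rw [hset]
      exact Set.ncard_pair (Wrd_qlow_ne_qhigh n hn1')
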